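/- Let d1, d2 ≥ 1, ν > 0 and c_ν > 0. Let R* be a probability measure on ℝ^{d1} × ℝ^{d2} and let Q* = Q⁽¹⁾ ⊗ Q⁽²⁾ be a product of probability measures on ℝ^{d1} and ℝ^{d2} such that |Φ_{Q⁽¹⁾}(t1)| ≥ c_ν for all t1 ∈ [−ν,ν]^{d1} and |Φ_{Q⁽²⁾}(t2)| ≥ c_ν for all t2 ∈ [−ν,ν]^{d2}, where Φ denotes the characteristic function. Then for every bounded measurable function h on [−ν,ν]^{d1} × [−ν,ν]^{d2}, M(Φ_{R*} + h; ν | R*, Q*) ≥ (c_ν⁴/2) · M^lin(h, Φ_{R*}; ν) − c_ν⁴ · ∫_{[−ν,ν]^{d1} × [−ν,ν]^{d2}} |h(t1, 0) · h(0, t2)|² dt1 dt2. -/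

import Mathlib

/- STATEMENT 6: lower bound on the contrast M at Φ_{R*} + h:
   M(Φ_{R*} + h; ν | R*, Q*) ≥ (c_ν⁴/2) M^lin(h, Φ_{R*}; ν)
     − c_ν⁴ ∫_{box} |h(t1,0) h(0,t2)|² dt1 dt2,
   when |Φ_{Q⁽¹⁾}| ≥ c_ν and |Φ_{Q⁽²⁾}| ≥ c_ν on the box. -/

namespace Stmt6

open MeasureTheory

/-- The box [−ν,ν]^n. -/
def box (n : ℕ) (ν : ℝ) : Set (Fin n → ℝ) := {t | ∀ a, |t a| ≤ ν}

/-- Characteristic function of a measure on ℝ^n. -/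
noncomputable def charFn {n : ℕ} (μ : Measure (Fin n → ℝ)) (t : Fin n → ℝ) : ℂ :=
  ∫ x, Complex.exp (Complex.I * ∑ a, (t a : ℂ) * (x a : ℂ)) ∂μ

/-- Characteristic function of a measure on ℝ^{d1} × ℝ^{d2}. -/
noncomputable def charFn2 {d1 d2 : ℕ} (R : Measure ((Fin d1 → ℝ) × (Fin d2 → ℝ)))
    (t1 : Fin d1 → ℝ) (t2 : Fin d2 → ℝ) : ℂ :=
  ∫ x, Complex.exp (Complex.I * ((∑ a, (t1 a : ℂ) * (x.1 a : ℂ)) +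
    ∑ a, (t2 a : ℂ) * (x.2 a : ℂ))) ∂ R

/-- The contrast function M(φ; ν | R, Q⁽¹⁾ ⊗ Q⁽²⁾). -/
noncomputable def contrast {d1 d2 : ℕ} (φ : ((Fin d1 → ℝ) × (Fin d2 → ℝ)) → ℂ) (ν : ℝ)
    (R : Measure ((Fin d1 → ℝ) × (Fin d2 → ℝ)))
    (Q1 : Measure (Fin d1 → ℝ)) (Q2 : Measure (Fin d2 → ℝ)) : ℝ :=
  ∫ t in (box d1 ν) ×ˢ (box d2 ν),
    ‖φ t * charFn2 R t.1 0 * charFn2 R 0 t.2 -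
      charFn2 R t.1 t.2 * φ (t.1, 0) * φ (0, t.2)‖ ^ 2 *
    ‖charFn Q1 t.1 * charFn Q2 t.2‖ ^ 2

/-- The linearized contrast M^lin(h, φ; ν). -/
noncomputable def Mlin {d1 d2 : ℕ} (h φ : ((Fin d1 → ℝ) × (Fin d2 → ℝ)) → ℂ) (ν : ℝ) : ℝ :=
  ∫ t in (box d1 ν) ×ˢ (box d2 ν),
    ‖h t * φ (t.1, 0) * φ (0, t.2) - φ t * h (t.1, 0) * φ (0, t.2) -
      φ t * φ (t.1, 0) * h (0, t.2)‖ ^ 2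

/-! ### Auxiliary lemmas -/

lemma norm_charFn_le_one {n : ℕ} (μ : Measure (Fin n → ℝ)) [IsProbabilityMeasure μ]
    (t : Fin n → ℝ) : ‖charFn μ t‖ ≤ 1 := by
  rw [charFn]
  have := norm_integral_le_of_norm_le_const (μ := μ)
    (f := fun x => Complex.exp (Complex.I * ∑ a, (t a : ℂ) * (x a : ℂ))) (C := 1) ?_
  · simpa using this
  · refine ae_of_all _ fun x => ?_
    show ‖Complex.exp (Complex.I * ∑ a, (t a : ℂ) * (x a : ℂ))‖ ≤ 1
    have h1 : (∑ a, (t a : ℂ) * (x a : ℂ)) = ((∑ a, t a * x a : ℝ) : ℂ) := by push_cast; ring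
    rw [h1, Complex.norm_exp]
    simp [Complex.mul_re]

lemma norm_charFn2_le_one {d1 d2 : ℕ} (R : Measure ((Fin d1 → ℝ) × (Fin d2 → ℝ)))
    [IsProbabilityMeasure R] (t1 : Fin d1 → ℝ) (t2 : Fin d2 → ℝ) :
    ‖charFn2 R t1 t2‖ ≤ 1 := by
  rw [charFn2]
  have := norm_integral_le_of_norm_le_const (μ := R)
    (f := fun x => Complex.exp (Complex.I * ((∑ a, (t1 a : ℂ) * (x.1 a : ℂ)) +
      ∑ a, (t2 a : ℂ) * (x.2 a : ℂ)))) (C := 1) ?_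
  · simpa using this
  · refine ae_of_all _ fun x => ?_
    show ‖Complex.exp (Complex.I * ((∑ a, (t1 a : ℂ) * (x.1 a : ℂ)) +
      ∑ a, (t2 a : ℂ) * (x.2 a : ℂ)))‖ ≤ 1
    have h1 : ((∑ a, (t1 a : ℂ) * (x.1 a : ℂ)) + ∑ a, (t2 a : ℂ) * (x.2 a : ℂ))
        = (((∑ a, t1 a * x.1 a) + ∑ a, t2 a * x.2 a : ℝ) : ℂ) := by push_cast; ring
    rw [h1, Complex.norm_exp]
    simp [Complex.mul_re]

lemma sm_charFn2 {d1 d2 : ℕ} (R : Measure ((Fin d1 → ℝ) × (Fin d2 → ℝ)))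
    [IsProbabilityMeasure R] :
    StronglyMeasurable (fun t : (Fin d1 → ℝ) × (Fin d2 → ℝ) => charFn2 R t.1 t.2) := by
  have hc : Continuous (fun p : ((Fin d1 → ℝ) × (Fin d2 → ℝ)) × ((Fin d1 → ℝ) × (Fin d2 → ℝ)) =>
      Complex.exp (Complex.I * ((∑ a, (p.1.1 a : ℂ) * (p.2.1 a : ℂ)) +
        ∑ a, (p.1.2 a : ℂ) * (p.2.2 a : ℂ)))) := by fun_prop
  exact hc.stronglyMeasurable.integral_prod_right' (ν := R)

lemma isCompact_box (n : ℕ) (ν : ℝ) : IsCompact (box n ν) := by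
  have : box n ν = Set.pi Set.univ (fun _ : Fin n => Set.Icc (-ν) ν) := by
    ext t; simp [box, abs_le, Set.mem_pi, Pi.le_def, forall_and]
  rw [this]
  exact isCompact_univ_pi fun _ => isCompact_Icc

lemma abs3 (x y z : ℂ) :
    ‖x - y - z‖ ≤ ‖x‖ + ‖y‖ + ‖z‖ := by
  calc ‖x - y - z‖ ≤ ‖x - y‖ + ‖z‖ := norm_sub_le _ _
  _ ≤ ‖x‖ + ‖y‖ + ‖z‖ := by gcongr; exact norm_sub_le _ _

lemma abs_mul3_le {a b c : ℂ} {A B D : ℝ} (hA : 0 ≤ A) (hB : 0 ≤ B) (hD : 0 ≤ D)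
    (ha : ‖a‖ ≤ A) (hb : ‖b‖ ≤ B) (hc : ‖c‖ ≤ D) :
    ‖a * b * c‖ ≤ A * B * D := by
  rw [norm_mul, norm_mul]
  have h0a := norm_nonneg a
  have h0b := norm_nonneg b
  have h0c := norm_nonneg c
  have h1 : ‖a‖ * ‖b‖ ≤ A * B :=
    mul_le_mul ha hb h0b hA
  exact mul_le_mul h1 hc h0c (mul_nonneg hA hB)

set_option maxHeartbeats 1000000 in
theorem stmt6 (d1 d2 : ℕ) (hd1 : 1 ≤ d1) (hd2 : 1 ≤ d2)
    (ν cν : ℝ) (hν : 0 < ν) (hcν : 0 < cν)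
    (R : Measure ((Fin d1 → ℝ) × (Fin d2 → ℝ))) [IsProbabilityMeasure R]
    (Q1 : Measure (Fin d1 → ℝ)) (Q2 : Measure (Fin d2 → ℝ))
    [IsProbabilityMeasure Q1] [IsProbabilityMeasure Q2]
    (hQ1 : ∀ t1 ∈ box d1 ν, cν ≤ ‖charFn Q1 t1‖)
    (hQ2 : ∀ t2 ∈ box d2 ν, cν ≤ ‖charFn Q2 t2‖)
    (h : ((Fin d1 → ℝ) × (Fin d2 → ℝ)) → ℂ) (hmeas : Measurable h)
    (C : ℝ) (hbd : ∀ t, ‖h t‖ ≤ C) :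
    contrast (fun t => charFn2 R t.1 t.2 + h t) ν R Q1 Q2 ≥
      cν ^ 4 / 2 * Mlin h (fun t => charFn2 R t.1 t.2) ν -
      cν ^ 4 * ∫ t in (box d1 ν) ×ˢ (box d2 ν),
        ‖h (t.1, 0) * h (0, t.2)‖ ^ 2 := by
  classical
  have hC : 0 ≤ C := le_trans (norm_nonneg _) (hbd (0, 0))
  set s : Set ((Fin d1 → ℝ) × (Fin d2 → ℝ)) := (box d1 ν) ×ˢ (box d2 ν) with hs
  -- measurability ingredients
  have sΦ : StronglyMeasurable (fun t : (Fin d1 → ℝ) × (Fin d2 → ℝ) => charFn2 R t.1 t.2) :=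
    sm_charFn2 R
  have mΦ : Measurable (fun t : (Fin d1 → ℝ) × (Fin d2 → ℝ) => charFn2 R t.1 t.2) :=
    sΦ.measurable
  have mcor1 : Measurable (fun t : (Fin d1 → ℝ) × (Fin d2 → ℝ) => (t.1, (0 : Fin d2 → ℝ))) :=
    measurable_fst.prodMk measurable_const
  have mcor2 : Measurable (fun t : (Fin d1 → ℝ) × (Fin d2 → ℝ) => ((0 : Fin d1 → ℝ), t.2)) :=
    measurable_const.prodMk measurable_snd
  have mΦ1 : Measurable (fun t : (Fin d1 → ℝ) × (Fin d2 → ℝ) => charFn2 R t.1 0) := by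
    have e : (fun t : (Fin d1 → ℝ) × (Fin d2 → ℝ) => charFn2 R t.1 0) =
        (fun p : (Fin d1 → ℝ) × (Fin d2 → ℝ) => charFn2 R p.1 p.2) ∘
          (fun t => (t.1, (0 : Fin d2 → ℝ))) := rfl
    rw [e]; exact mΦ.comp mcor1
  have mΦ2 : Measurable (fun t : (Fin d1 → ℝ) × (Fin d2 → ℝ) => charFn2 R 0 t.2) := by
    have e : (fun t : (Fin d1 → ℝ) × (Fin d2 → ℝ) => charFn2 R 0 t.2) =
        (fun p : (Fin d1 → ℝ) × (Fin d2 → ℝ) => charFn2 R p.1 p.2) ∘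
          (fun t => ((0 : Fin d1 → ℝ), t.2)) := rfl
    rw [e]; exact mΦ.comp mcor2
  have mh1 : Measurable (fun t : (Fin d1 → ℝ) × (Fin d2 → ℝ) => h (t.1, 0)) :=
    hmeas.comp mcor1
  have mh2 : Measurable (fun t : (Fin d1 → ℝ) × (Fin d2 → ℝ) => h (0, t.2)) :=
    hmeas.comp mcor2
  have mQ1 : Measurable (fun t : (Fin d1 → ℝ) × (Fin d2 → ℝ) => charFn Q1 t.1) := by
    have hc : Continuous (fun p : (Fin d1 → ℝ) × (Fin d1 → ℝ) =>
        Complex.exp (Complex.I * ∑ a, (p.1 a : ℂ) * (p.2 a : ℂ))) := by fun_prop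
    exact (hc.stronglyMeasurable.integral_prod_right'
      (ν := Q1)).measurable.comp measurable_fst
  have mQ2 : Measurable (fun t : (Fin d1 → ℝ) × (Fin d2 → ℝ) => charFn Q2 t.2) := by
    have hc : Continuous (fun p : (Fin d2 → ℝ) × (Fin d2 → ℝ) =>
        Complex.exp (Complex.I * ∑ a, (p.1 a : ℂ) * (p.2 a : ℂ))) := by fun_prop
    exact (hc.stronglyMeasurable.integral_prod_right'
      (ν := Q2)).measurable.comp measurable_snd
  -- the set s
  have hcomp : IsCompact s := (isCompact_box d1 ν).prod (isCompact_box d2 ν)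
  have hsmeas : MeasurableSet s := hcomp.isClosed.measurableSet
  haveI : IsFiniteMeasure (volume.restrict s) :=
    ⟨by rw [Measure.restrict_apply_univ]; exact hcomp.measure_lt_top⟩
  -- bounds
  have bΦ : ∀ t1 t2, ‖charFn2 R t1 t2‖ ≤ 1 := norm_charFn2_le_one R
  -- the linear term
  set L : ((Fin d1 → ℝ) × (Fin d2 → ℝ)) → ℂ := fun t =>
    h t * charFn2 R t.1 0 * charFn2 R 0 t.2 -
      charFn2 R t.1 t.2 * h (t.1, 0) * charFn2 R 0 t.2 -
      charFn2 R t.1 t.2 * charFn2 R t.1 0 * h (0, t.2) with hLdef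
  have mL : Measurable L :=
    (((hmeas.mul mΦ1).mul mΦ2).sub ((mΦ.mul mh1).mul mΦ2)).sub ((mΦ.mul mΦ1).mul mh2)
  have hLb : ∀ t, ‖L t‖ ≤ 3 * C := by
    intro t
    have h0 := abs3 (h t * charFn2 R t.1 0 * charFn2 R 0 t.2)
      (charFn2 R t.1 t.2 * h (t.1, 0) * charFn2 R 0 t.2)
      (charFn2 R t.1 t.2 * charFn2 R t.1 0 * h (0, t.2))
    have t1 : ‖h t * charFn2 R t.1 0 * charFn2 R 0 t.2‖ ≤ C * 1 * 1 :=
      abs_mul3_le hC zero_le_one zero_le_one (hbd t) (bΦ _ _) (bΦ _ _)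
    have t2 : ‖charFn2 R t.1 t.2 * h (t.1, 0) * charFn2 R 0 t.2‖ ≤ 1 * C * 1 :=
      abs_mul3_le zero_le_one hC zero_le_one (bΦ _ _) (hbd _) (bΦ _ _)
    have t3 : ‖charFn2 R t.1 t.2 * charFn2 R t.1 0 * h (0, t.2)‖ ≤ 1 * 1 * C :=
      abs_mul3_le zero_le_one zero_le_one hC (bΦ _ _) (bΦ _ _) (hbd _)
    simp only [hLdef]
    linarith
  -- real-valued integrands
  set fL : ((Fin d1 → ℝ) × (Fin d2 → ℝ)) → ℝ := fun t => ‖L t‖ ^ 2 with hfL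
  set fm : ((Fin d1 → ℝ) × (Fin d2 → ℝ)) → ℝ := fun t =>
    ‖h (t.1, 0) * h (0, t.2)‖ ^ 2 with hfm
  set fF : ((Fin d1 → ℝ) × (Fin d2 → ℝ)) → ℝ := fun t =>
    ‖(charFn2 R t.1 t.2 + h t) * charFn2 R t.1 0 * charFn2 R 0 t.2 -
      charFn2 R t.1 t.2 * (charFn2 R t.1 0 + h (t.1, 0)) * (charFn2 R 0 t.2 + h (0, t.2))‖ ^ 2 *
      ‖charFn Q1 t.1 * charFn Q2 t.2‖ ^ 2 with hfF
  -- integrability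
  have intOf : ∀ (g : ((Fin d1 → ℝ) × (Fin d2 → ℝ)) → ℝ), Measurable g → ∀ (K : ℝ),
      (∀ t, |g t| ≤ K) → IntegrableOn g s volume := by
    intro g hg K hK
    exact (integrable_const K).mono' hg.aestronglyMeasurable
      (ae_of_all _ fun t => by rw [Real.norm_eq_abs]; exact hK t)
  have mfL : Measurable fL := by
    have : Measurable (fun t => ‖L t‖) := mL.norm
    exact this.pow_const 2
  have mfm : Measurable fm := by
    have : Measurable (fun t : (Fin d1 → ℝ) × (Fin d2 → ℝ) => ‖h (t.1, 0) * h (0, t.2)‖) := (mh1.mul mh2).norm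
    exact this.pow_const 2
  have mfF : Measurable fF := by
    have m1 : Measurable (fun t : (Fin d1 → ℝ) × (Fin d2 → ℝ) =>
        (charFn2 R t.1 t.2 + h t) * charFn2 R t.1 0 * charFn2 R 0 t.2 -
        charFn2 R t.1 t.2 * (charFn2 R t.1 0 + h (t.1, 0)) * (charFn2 R 0 t.2 + h (0, t.2))) :=
      (((mΦ.add hmeas).mul mΦ1).mul mΦ2).sub ((mΦ.mul (mΦ1.add mh1)).mul (mΦ2.add mh2))
    exact ((m1.norm.pow_const 2)).mul ((mQ1.mul mQ2).norm.pow_const 2)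
  have intfL : IntegrableOn fL s volume := by
    refine intOf fL mfL ((3 * C) ^ 2) fun t => ?_
    rw [abs_of_nonneg (by positivity)]
    exact pow_le_pow_left₀ (norm_nonneg _) (hLb t) 2
  have intfm : IntegrableOn fm s volume := by
    refine intOf fm mfm ((C * C) ^ 2) fun t => ?_
    rw [abs_of_nonneg (by positivity)]
    refine pow_le_pow_left₀ (norm_nonneg _) ?_ 2
    rw [norm_mul]
    exact mul_le_mul (hbd _) (hbd _) (norm_nonneg _) hC
  have intfF : IntegrableOn fF s volume := by
    refine intOf fF mfF ((3 * C + C * C) ^ 2 * 1) fun t => ?_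
    rw [abs_of_nonneg (by positivity)]
    have hX : ((charFn2 R t.1 t.2 + h t) * charFn2 R t.1 0 * charFn2 R 0 t.2 -
        charFn2 R t.1 t.2 * (charFn2 R t.1 0 + h (t.1, 0)) * (charFn2 R 0 t.2 + h (0, t.2))) =
        L t - charFn2 R t.1 t.2 * (h (t.1, 0) * h (0, t.2)) := by
      simp only [hLdef]; ring
    have hXb : ‖(charFn2 R t.1 t.2 + h t) * charFn2 R t.1 0 * charFn2 R 0 t.2 -
        charFn2 R t.1 t.2 * (charFn2 R t.1 0 + h (t.1, 0)) * (charFn2 R 0 t.2 + h (0, t.2))‖ ≤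
        3 * C + C * C := by
      rw [hX]
      refine le_trans (norm_sub_le _ _) ?_
      have hB : ‖charFn2 R t.1 t.2 * (h (t.1, 0) * h (0, t.2))‖ ≤ C * C := by
        rw [norm_mul, norm_mul]
        have := mul_le_mul (hbd (t.1, 0)) (hbd (0, t.2)) (norm_nonneg _) hC
        calc ‖charFn2 R t.1 t.2‖ * (‖h (t.1, 0)‖ * ‖h (0, t.2)‖)
            ≤ 1 * (C * C) := mul_le_mul (bΦ _ _) this
              (mul_nonneg (norm_nonneg _) (norm_nonneg _)) zero_le_one
        _ = C * C := one_mul _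
      linarith [hLb t]
    have hQb : ‖charFn Q1 t.1 * charFn Q2 t.2‖ ^ 2 ≤ 1 := by
      rw [norm_mul]
      have h1 := norm_charFn_le_one Q1 t.1
      have h2 := norm_charFn_le_one Q2 t.2
      have h0b := norm_nonneg (charFn Q2 t.2)
      have hmul : ‖charFn Q1 t.1‖ * ‖charFn Q2 t.2‖ ≤ 1 := by
        calc ‖charFn Q1 t.1‖ * ‖charFn Q2 t.2‖ ≤ 1 * 1 :=
          mul_le_mul h1 h2 h0b zero_le_one
        _ = 1 := one_mul 1
      calc (‖charFn Q1 t.1‖ * ‖charFn Q2 t.2‖) ^ 2 ≤ 1 ^ 2 :=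
        pow_le_pow_left₀ (by positivity) hmul 2
      _ = 1 := one_pow 2
    have := mul_le_mul (pow_le_pow_left₀ (norm_nonneg _) hXb 2) hQb
      (by positivity) (by positivity)
    simpa [hfF] using this
  have intfG : IntegrableOn (fun t => cν ^ 4 / 2 * fL t - cν ^ 4 * fm t) s volume :=
    (intfL.const_mul _).sub (intfm.const_mul _)
  -- pointwise bound
  have key : ∀ t ∈ s, cν ^ 4 / 2 * fL t - cν ^ 4 * fm t ≤ fF t := by
    intro t ht
    obtain ⟨ht1, ht2⟩ := ht
    have hq1 := hQ1 t.1 ht1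
    have hq2 := hQ2 t.2 ht2
    have h0a := norm_nonneg (charFn Q1 t.1)
    have h0b := norm_nonneg (charFn Q2 t.2)
    have hQ : cν ^ 4 ≤ ‖charFn Q1 t.1 * charFn Q2 t.2‖ ^ 2 := by
      rw [norm_mul]
      have hq12 : cν * cν ≤ ‖charFn Q1 t.1‖ * ‖charFn Q2 t.2‖ :=
        mul_le_mul hq1 hq2 hcν.le (hcν.le.trans hq1)
      calc cν ^ 4 = (cν * cν) ^ 2 := by ring
      _ ≤ (‖charFn Q1 t.1‖ * ‖charFn Q2 t.2‖) ^ 2 :=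
        pow_le_pow_left₀ (by positivity) hq12 2
    set X : ℂ := (charFn2 R t.1 t.2 + h t) * charFn2 R t.1 0 * charFn2 R 0 t.2 -
      charFn2 R t.1 t.2 * (charFn2 R t.1 0 + h (t.1, 0)) * (charFn2 R 0 t.2 + h (0, t.2))
      with hXdef
    set B : ℂ := charFn2 R t.1 t.2 * (h (t.1, 0) * h (0, t.2)) with hBdef
    have hX : X = L t - B := by simp only [hXdef, hBdef, hLdef]; ring
    set l : ℝ := ‖L t‖ with hl
    set b : ℝ := ‖B‖ with hb
    set x : ℝ := ‖X‖ with hx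
    set m : ℝ := ‖h (t.1, 0) * h (0, t.2)‖ with hm
    have hln := norm_nonneg (L t)
    have hbn := norm_nonneg B
    have hxn := norm_nonneg X
    have hmn := norm_nonneg (h (t.1, 0) * h (0, t.2))
    have hbm : b ≤ m := by
      rw [hb, hBdef, norm_mul]
      exact mul_le_of_le_one_left hmn (bΦ _ _)
    have hrev : |l - b| ≤ x := by
      rw [hl, hb, hx, hX]
      exact abs_norm_sub_norm_le (L t) B
    obtain ⟨hr1, hr2⟩ := abs_le.mp hrev
    have h5 : (l - b) ^ 2 ≤ x ^ 2 := sq_le_sq' (by linarith) hr2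
    have h6 : l ^ 2 / 2 - m ^ 2 ≤ x ^ 2 := by
      nlinarith [sq_nonneg (l - 2 * b), mul_self_le_mul_self hbn hbm]
    have hc4 : (0 : ℝ) < cν ^ 4 := pow_pos hcν 4
    have h7 : cν ^ 4 * (l ^ 2 / 2 - m ^ 2) ≤ cν ^ 4 * x ^ 2 :=
      mul_le_mul_of_nonneg_left h6 hc4.le
    have h8 : cν ^ 4 * x ^ 2 ≤ x ^ 2 * ‖charFn Q1 t.1 * charFn Q2 t.2‖ ^ 2 := by
      nlinarith [mul_le_mul_of_nonneg_left hQ (sq_nonneg x)]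
    simp only [hfF, hfL, hfm, ← hXdef, ← hx, ← hl, ← hm]
    nlinarith
  -- assemble
  have main : (∫ t in s, (cν ^ 4 / 2 * fL t - cν ^ 4 * fm t)) ≤ ∫ t in s, fF t :=
    setIntegral_mono_on intfG intfF hsmeas key
  have e3 : (∫ t in s, (cν ^ 4 / 2 * fL t - cν ^ 4 * fm t)) =
      cν ^ 4 / 2 * (∫ t in s, fL t) - cν ^ 4 * (∫ t in s, fm t) := by
    rw [integral_sub (intfL.const_mul _) (intfm.const_mul _), integral_const_mul,
      integral_const_mul]
  have e1 : contrast (fun t => charFn2 R t.1 t.2 + h t) ν R Q1 Q2 = ∫ t in s, fF t := rfl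
  have e2 : Mlin h (fun t => charFn2 R t.1 t.2) ν = ∫ t in s, fL t := rfl
  have e4 : (∫ t in (box d1 ν) ×ˢ (box d2 ν),
      ‖h (t.1, 0) * h (0, t.2)‖ ^ 2) = ∫ t in s, fm t := rfl
  rw [ge_iff_le, e1, e2, e4, ← e3]
  exact main

end Stmt6
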